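/- arXiv:1607.04548 — 2 statements merged into one kernel-verified Lean document; each statement's English description precedes it below -/
import Mathlib

section
/- Let G=(V,E) be a locally finite graph with symmetric positive edge weights, μ(x) ≥ μ_min > 0, and h satisfying (H1) and (H2). Let f satisfy (F1) with f(x,s)=0 for s ≤ 0, let ε > 0, and let g ∈ ℋ' with g ≥ 0 and g ≢ 0. Then there exist τ₀ > 0 and v ∈ ℋ with ‖v‖_ℋ = 1 such that J_ε(tv) < 0 for all 0 < t < τ₀; in particular, inf over ‖u‖_ℋ ≤ τ₀ of J_ε(u) is strictly negative. -/
open Filter Topology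

namespace GraphNLE

variable {V : Type*}

/-- Integral of `g` over `V` w.r.t. the measure `μ`: `∫_V g dμ = Σ_x μ(x) g(x)`. -/
noncomputable def intV (μ g : V → ℝ) : ℝ := ∑' x, μ x * g x

/-- The graph (μ-)Laplacian: `Δu(x) = (1/μ(x)) Σ_{y} w_{xy} (u(y)-u(x))`. -/
noncomputable def lap (w : V → V → ℝ) (μ u : V → ℝ) (x : V) : ℝ :=
  (1 / μ x) * ∑' y, w x y * (u y - u x)

/-- Squared length of the gradient: `|∇u|²(x) = (1/(2μ(x))) Σ_y w_{xy} (u(y)-u(x))²`. -/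
noncomputable def gradSq (w : V → V → ℝ) (μ u : V → ℝ) (x : V) : ℝ :=
  (1 / (2 * μ x)) * ∑' y, w x y * (u y - u x) ^ 2

/-- The gradient form `Γ(u,v)(x) = (1/(2μ(x))) Σ_y w_{xy} (u(y)-u(x))(v(y)-v(x))`. -/
noncomputable def gamma (w : V → V → ℝ) (μ u v : V → ℝ) (x : V) : ℝ :=
  (1 / (2 * μ x)) * ∑' y, w x y * (u y - u x) * (v y - v x)

/-- Membership in `W^{1,2}(V)`: finite `∫(|∇u|² + u²) dμ`. -/
def memW (w : V → V → ℝ) (μ u : V → ℝ) : Prop :=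
  Summable (fun x => μ x * gradSq w μ u x) ∧ Summable (fun x => μ x * u x ^ 2)

/-- The `W^{1,2}` norm `(∫_V (|∇u|² + u²) dμ)^{1/2}`. -/
noncomputable def normW (w : V → V → ℝ) (μ u : V → ℝ) : ℝ :=
  Real.sqrt (intV μ fun x => gradSq w μ u x + u x ^ 2)

/-- Membership in the space `ℋ`: finite `∫(|∇u|² + h u²) dμ`. -/
def memH (w : V → V → ℝ) (μ h u : V → ℝ) : Prop :=
  Summable (fun x => μ x * gradSq w μ u x) ∧ Summable (fun x => μ x * (h x * u x ^ 2))

/-- The norm of `ℋ`: `‖u‖_ℋ = (∫_V (|∇u|² + h u²) dμ)^{1/2}`. -/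
noncomputable def normH (w : V → V → ℝ) (μ h u : V → ℝ) : ℝ :=
  Real.sqrt (intV μ fun x => gradSq w μ u x + h x * u x ^ 2)

/-- The inner product of `ℋ`: `⟨u,v⟩_ℋ = ∫_V (Γ(u,v) + h u v) dμ`. -/
noncomputable def innerH (w : V → V → ℝ) (μ h u v : V → ℝ) : ℝ :=
  intV μ fun x => gamma w μ u v x + h x * u x * v x

/-- `λ₁ = inf { ∫(|∇u|² + h u²) dμ : u ∈ ℋ, ∫ u² dμ = 1 }`. -/
noncomputable def lambda1 (w : V → V → ℝ) (μ h : V → ℝ) : ℝ :=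
  sInf {t : ℝ | ∃ u : V → ℝ, memH w μ h u ∧ intV μ (fun x => u x ^ 2) = 1 ∧
    intV μ (fun x => gradSq w μ u x + h x * u x ^ 2) = t}

/-- The primitive `F(x,s) = ∫_0^s f(x,t) dt`. -/
noncomputable def Fint (f : V → ℝ → ℝ) (x : V) (s : ℝ) : ℝ := ∫ t in (0:ℝ)..s, f x t

/-- The functional `J(u) = (1/2)∫(|∇u|² + h u²) dμ − ∫ F(x,u) dμ`. -/
noncomputable def energy (w : V → V → ℝ) (μ h : V → ℝ) (f : V → ℝ → ℝ) (u : V → ℝ) : ℝ :=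
  (1 / 2) * intV μ (fun x => gradSq w μ u x + h x * u x ^ 2) -
    intV μ (fun x => Fint f x (u x))

/-- The perturbed functional `J_ε(u) = J(u) − ε ∫ g u dμ`. -/
noncomputable def energyP (w : V → V → ℝ) (μ h : V → ℝ) (f : V → ℝ → ℝ) (g : V → ℝ)
    (ε : ℝ) (u : V → ℝ) : ℝ :=
  energy w μ h f u - ε * intV μ (fun x => g x * u x)

/-- Weak convergence `u_k ⇀ u` in the Hilbert space `ℋ`. -/
def weakConvH (w : V → V → ℝ) (μ h : V → ℝ) (uk : ℕ → V → ℝ) (u : V → ℝ) : Prop :=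
  ∀ v : V → ℝ, memH w μ h v →
    Tendsto (fun k => innerH w μ h (uk k) v) atTop (nhds (innerH w μ h u v))

/-- The `L^q(V,μ)` norm for finite `q`. -/
noncomputable def LqNorm (μ : V → ℝ) (q : ℝ) (u : V → ℝ) : ℝ :=
  (intV μ fun x => |u x| ^ q) ^ (1 / q)

/-- The `L^∞(V)` norm `sup_x |u(x)|`. -/
noncomputable def LinfNorm (u : V → ℝ) : ℝ := ⨆ x, |u x|

/-- `g` (viewed via the pairing `u ↦ ∫ g u dμ`) belongs to the dual `ℋ'` of `ℋ`. -/
def memHdual (w : V → V → ℝ) (μ h g : V → ℝ) : Prop :=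
  ∃ C : ℝ, ∀ u : V → ℝ, memH w μ h u →
    Summable (fun x => μ x * (g x * u x)) ∧
    |intV μ fun x => g x * u x| ≤ C * normH w μ h u

/-- `u ∈ ℋ` is a weak solution of `−Δu + hu = f(x,u)`. -/
def weakSol (w : V → V → ℝ) (μ h : V → ℝ) (f : V → ℝ → ℝ) (u : V → ℝ) : Prop :=
  memH w μ h u ∧ ∀ φ : V → ℝ, memH w μ h φ →
    intV μ (fun x => gamma w μ u φ x + h x * u x * φ x) =
      intV μ (fun x => f x (u x) * φ x)

/-- `u ∈ ℋ` is a weak solution of the perturbed equation `−Δu + hu = f(x,u) + εg`. -/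
def weakSolP (w : V → V → ℝ) (μ h : V → ℝ) (f : V → ℝ → ℝ) (g : V → ℝ) (ε : ℝ)
    (u : V → ℝ) : Prop :=
  memH w μ h u ∧ ∀ φ : V → ℝ, memH w μ h φ →
    intV μ (fun x => gamma w μ u φ x + h x * u x * φ x) =
      intV μ (fun x => f x (u x) * φ x) + ε * intV μ (fun x => g x * φ x)

/-- The simple graph underlying the weights `w` (edges where the weight is nonzero). -/
def adjGraph (w : V → V → ℝ) : SimpleGraph V where
  Adj x y := x ≠ y ∧ (w x y ≠ 0 ∨ w y x ≠ 0)
  symm := ⟨fun x y hxy => ⟨hxy.1.symm, hxy.2.symm⟩⟩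
  loopless := ⟨fun x hx => hx.1 rfl⟩


lemma gradSq_smul (w : V → V → ℝ) (μ u : V → ℝ) (c : ℝ) (x : V) :
    gradSq w μ (fun y => c * u y) x = c ^ 2 * gradSq w μ u x := by
  unfold gradSq
  have hcong : (fun y => w x y * (c * u y - c * u x) ^ 2)
      = fun y => c ^ 2 * (w x y * (u y - u x) ^ 2) := by
    funext y; ring
  rw [hcong, tsum_mul_left]; ring

lemma memH_smul {w : V → V → ℝ} {μ h u : V → ℝ} (c : ℝ) (hu : memH w μ h u) :
    memH w μ h (fun y => c * u y) := by
  constructor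
  · have hcong : (fun x => μ x * gradSq w μ (fun y => c * u y) x)
        = fun x => c ^ 2 * (μ x * gradSq w μ u x) := by
      funext x; rw [gradSq_smul]; ring
    rw [hcong]; exact hu.1.mul_left _
  · have hcong : (fun x => μ x * (h x * (c * u x) ^ 2))
        = fun x => c ^ 2 * (μ x * (h x * u x ^ 2)) := by funext x; ring
    rw [hcong]; exact hu.2.mul_left _

lemma normH_smul (w : V → V → ℝ) (μ h u : V → ℝ) (c : ℝ) :
    normH w μ h (fun y => c * u y) = |c| * normH w μ h u := by
  unfold normH intV
  have hcong : (fun x => μ x * (gradSq w μ (fun y => c * u y) x + h x * (c * u x) ^ 2))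
      = fun x => c ^ 2 * (μ x * (gradSq w μ u x + h x * u x ^ 2)) := by
    funext x; rw [gradSq_smul]; ring
  rw [hcong, tsum_mul_left, Real.sqrt_mul (sq_nonneg c), Real.sqrt_sq_eq_abs]

lemma gradSq_nonneg {w : V → V → ℝ} {μ : V → ℝ} (hw : ∀ x y, 0 ≤ w x y)
    (hμ : ∀ x, 0 ≤ μ x) (u : V → ℝ) (x : V) : 0 ≤ gradSq w μ u x := by
  have hμx := hμ x
  exact mul_nonneg (by positivity) (tsum_nonneg fun y => mul_nonneg (hw x y) (sq_nonneg _))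

set_option maxHeartbeats 1000000 in
theorem perturbed_energy_negative_near_zero
    (w : V → V → ℝ) (hsymm : ∀ x y, w x y = w y x) (hwnn : ∀ x y, 0 ≤ w x y)
    (hlf : ∀ x : V, {y | w x y ≠ 0}.Finite)
    (μ : V → ℝ) (μmin : ℝ) (hμmin : 0 < μmin) (hμ : ∀ x, μmin ≤ μ x)
    (h : V → ℝ) (h₀ : ℝ) (hh₀ : 0 < h₀) (hH1 : ∀ x, h₀ ≤ h x)
    (hH2 : Summable fun x => μ x * (1 / h x))
    (f : V → ℝ → ℝ)
    (hF1c : ∀ x, Continuous (f x)) (hF10 : ∀ x, f x 0 = 0)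
    (hF1b : ∀ M : ℝ, 0 < M → ∃ A : ℝ, ∀ x, ∀ s ∈ Set.Icc (0:ℝ) M, f x s ≤ A)
    (hfneg : ∀ x, ∀ s : ℝ, s ≤ 0 → f x s = 0)
    (g : V → ℝ) (hgdual : memHdual w μ h g)
    (hgnn : ∀ x, 0 ≤ g x) (hgne : g ≠ 0)
    (ε : ℝ) (hε : 0 < ε) :
    ∃ τ₀ : ℝ, 0 < τ₀ ∧ ∃ v : V → ℝ, memH w μ h v ∧ normH w μ h v = 1 ∧
      (∀ t : ℝ, 0 < t → t < τ₀ → energyP w μ h f g ε (fun x => t * v x) < 0) ∧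
      sInf ((fun u => energyP w μ h f g ε u) ''
        {u : V → ℝ | memH w μ h u ∧ normH w μ h u ≤ τ₀}) < 0 := by
  classical
  -- pick a vertex where g is positive
  obtain ⟨x₀, hx₀⟩ : ∃ x, g x ≠ 0 := Function.ne_iff.mp hgne
  have hgx₀ : 0 < g x₀ := lt_of_le_of_ne (hgnn x₀) (Ne.symm hx₀)
  have hμpos : ∀ x, 0 < μ x := fun x => lt_of_lt_of_le hμmin (hμ x)
  have hhpos : ∀ x, 0 < h x := fun x => lt_of_lt_of_le hh₀ (hH1 x)
  -- the indicator function δ of x₀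
  set δ : V → ℝ := fun y => if y = x₀ then (1:ℝ) else 0 with hδdef
  have hδx₀ : δ x₀ = 1 := by simp [hδdef]
  have hδne : ∀ y ≠ x₀, δ y = 0 := fun y hy => by simp [hδdef, hy]
  -- gradSq of δ vanishes outside a finite set
  have hgs0 : ∀ x, x ≠ x₀ → w x₀ x = 0 → gradSq w μ δ x = 0 := by
    intro x hx hw0
    have : ∀ y, w x y * (δ y - δ x) ^ 2 = 0 := by
      intro y
      rcases eq_or_ne y x₀ with rfl | hy
      · rw [hsymm, hw0]; ring
      · simp [hδne y hy, hδne x hx]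
    unfold gradSq
    rw [tsum_congr this, tsum_zero, mul_zero]
  have hδmemH : memH w μ h δ := by
    constructor
    · refine summable_of_ne_finset_zero
        (s := insert x₀ (hlf x₀).toFinset) (fun b hb => ?_)
      simp only [Finset.mem_insert, Set.Finite.mem_toFinset, Set.mem_setOf_eq] at hb
      push_neg at hb
      rw [hgs0 b hb.1 hb.2, mul_zero]
    · refine summable_of_ne_finset_zero (s := {x₀}) (fun b hb => ?_)
      simp only [Finset.mem_singleton] at hb
      rw [hδne b hb]; ring
  -- the squared H-norm of δ
  set N2 : ℝ := ∑' x, μ x * (gradSq w μ δ x + h x * δ x ^ 2) with hN2def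
  have hSsumδ : Summable (fun x => μ x * (gradSq w μ δ x + h x * δ x ^ 2)) := by
    have := hδmemH.1.add hδmemH.2
    simpa [mul_add] using this
  have hterm_nonneg : ∀ (u : V → ℝ) (x : V), 0 ≤ μ x * (gradSq w μ u x + h x * u x ^ 2) := by
    intro u x
    refine mul_nonneg (hμpos x).le (add_nonneg (gradSq_nonneg hwnn (fun y => (hμpos y).le) u x)
      (mul_nonneg (hhpos x).le (sq_nonneg _)))
  have hN2pos : 0 < N2 := by
    have hle : μ x₀ * (gradSq w μ δ x₀ + h x₀ * δ x₀ ^ 2) ≤ N2 :=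
      Summable.le_tsum hSsumδ x₀ (fun b _ => hterm_nonneg δ b)
    have : 0 < μ x₀ * (gradSq w μ δ x₀ + h x₀ * δ x₀ ^ 2) := by
      rw [hδx₀]
      have h1 := gradSq_nonneg hwnn (fun y => (hμpos y).le) δ x₀
      have := hhpos x₀
      have := hμpos x₀
      nlinarith
    linarith
  set N : ℝ := Real.sqrt N2 with hNdef
  have hNpos : 0 < N := Real.sqrt_pos.mpr hN2pos
  have hNsq : N ^ 2 = N2 := Real.sq_sqrt hN2pos.le
  -- the normalized function v
  set v : V → ℝ := fun y => (1 / N) * δ y with hvdef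
  have hvmemH : memH w μ h v := memH_smul _ hδmemH
  have hnormδ : normH w μ h δ = N := by rw [normH, intV, hNdef, hN2def]
  have hnormv : normH w μ h v = 1 := by
    rw [hvdef, normH_smul, hnormδ, abs_of_pos (by positivity)]
    field_simp
  -- energy along the ray through δ
  have key : ∀ s : ℝ, energyP w μ h f g ε (fun x => s * δ x)
      = (1 / 2) * (s ^ 2 * N2) - μ x₀ * Fint f x₀ s - ε * (μ x₀ * (g x₀ * s)) := by
    intro s
    have t1 : intV μ (fun x => gradSq w μ (fun y => s * δ y) x + h x * (s * δ x) ^ 2)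
        = s ^ 2 * N2 := by
      rw [intV]
      have hcong : (fun x => μ x * (gradSq w μ (fun y => s * δ y) x + h x * (s * δ x) ^ 2))
          = fun x => s ^ 2 * (μ x * (gradSq w μ δ x + h x * δ x ^ 2)) := by
        funext x; rw [gradSq_smul]; ring
      rw [hcong, tsum_mul_left, hN2def]
    have t2 : intV μ (fun x => Fint f x (s * δ x)) = μ x₀ * Fint f x₀ s := by
      rw [intV]
      rw [tsum_eq_single x₀ (fun b hb => by
        rw [hδne b hb, mul_zero, Fint, intervalIntegral.integral_same, mul_zero])]
      rw [hδx₀, mul_one]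
    have t3 : intV μ (fun x => g x * (s * δ x)) = μ x₀ * (g x₀ * s) := by
      rw [intV]
      rw [tsum_eq_single x₀ (fun b hb => by rw [hδne b hb]; ring)]
      rw [hδx₀]; ring
    rw [energyP, energy, t1, t2, t3]
  -- the linear coefficient
  set κ : ℝ := ε * (μ x₀ * g x₀) with hκdef
  have hκpos : 0 < κ := by
    have := hμpos x₀; positivity
  -- continuity of f x₀ at 0
  have hcont := Metric.continuous_iff.mp (hF1c x₀) 0 (κ / (2 * μ x₀))
    (by have := hμpos x₀; positivity)
  obtain ⟨η, hηpos, hη⟩ := hcont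
  -- choice of τ₀
  set σ : ℝ := min η (κ / N2) with hσdef
  have hσpos : 0 < σ := lt_min hηpos (by positivity)
  set τ₀ : ℝ := N * σ with hτ₀def
  have hτ₀pos : 0 < τ₀ := mul_pos hNpos hσpos
  -- the basic negativity estimate along the ray
  have hneg : ∀ s : ℝ, 0 < s → s < σ → energyP w μ h f g ε (fun x => s * δ x) < 0 := by
    intro s hs0 hsσ
    rw [key s]
    have hsη : s < η := lt_of_lt_of_le hsσ (min_le_left _ _)
    have hsκ : s < κ / N2 := lt_of_lt_of_le hsσ (min_le_right _ _)
    have hsN : s * N2 < κ := (lt_div_iff₀ hN2pos).mp hsκ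
    -- bound on the F-term
    have hFb : ‖∫ t in (0:ℝ)..s, f x₀ t‖ ≤ (κ / (2 * μ x₀)) * |s - 0| := by
      refine intervalIntegral.norm_integral_le_of_norm_le_const (fun r hr => ?_)
      rw [Set.uIoc_of_le hs0.le] at hr
      have hr0 : 0 < r := hr.1
      have hrs : r ≤ s := hr.2
      have hdist : dist r 0 < η := by
        rw [Real.dist_eq, sub_zero, abs_of_pos hr0]; linarith
      have := hη r hdist
      rw [hF10 x₀, Real.dist_eq, sub_zero] at this
      exact le_of_lt (by simpa [Real.norm_eq_abs] using this)
    rw [sub_zero, abs_of_pos hs0, Real.norm_eq_abs] at hFb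
    have hFb' : -((κ / (2 * μ x₀)) * s) ≤ Fint f x₀ s := by
      rw [Fint]; exact neg_le_of_abs_le hFb
    have hmul : μ x₀ * (κ / (2 * μ x₀)) = κ / 2 := by
      field_simp [(hμpos x₀).ne']
    have hμx₀ := hμpos x₀
    have hprod : 0 < s * (κ - s * N2) := mul_pos hs0 (by linarith)
    nlinarith [mul_le_mul_of_nonneg_left hFb' hμx₀.le]
  -- first conclusion: negativity on the ball of radius τ₀ along v
  have hray : ∀ t : ℝ, 0 < t → t < τ₀ → energyP w μ h f g ε (fun x => t * v x) < 0 := by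
    intro t ht0 htτ
    have hEq : (fun x => t * v x) = fun x => (t / N) * δ x := by
      funext x; rw [hvdef]; field_simp
    rw [hEq]
    refine hneg (t / N) (by positivity) ?_
    rw [div_lt_iff₀ hNpos]
    calc t < τ₀ := htτ
      _ = σ * N := by rw [hτ₀def]; ring
  refine ⟨τ₀, hτ₀pos, v, hvmemH, hnormv, hray, ?_⟩
  -- boundedness from below of the functional on the ball
  set M : ℝ := τ₀ / Real.sqrt (μmin * h₀) with hMdef
  have hMpos : 0 < M := by positivity
  obtain ⟨A, hA⟩ := hF1b M hMpos
  have hA0 : 0 ≤ A := by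
    have := hA x₀ 0 ⟨le_refl 0, hMpos.le⟩
    rw [hF10 x₀] at this; exact this
  obtain ⟨C, hC⟩ := hgdual
  have hC0 : 0 ≤ C := by
    have := (hC v hvmemH).2
    rw [hnormv, mul_one] at this
    exact le_trans (abs_nonneg _) this
  set C₁ : ℝ := ∑' x, μ x * (1 / h x) with hC₁def
  set B : ℝ := (C₁ + τ₀ ^ 2) / 2 with hBdef
  have hC₁0 : 0 ≤ C₁ :=
    tsum_nonneg fun x => mul_nonneg (hμpos x).le (by have := hhpos x; positivity)
  have hB0 : 0 ≤ B := by positivity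
  set L : ℝ := -(A * B) - ε * (C * τ₀) with hLdef
  have hLB : ∀ u : V → ℝ, memH w μ h u → normH w μ h u ≤ τ₀ →
      L ≤ energyP w μ h f g ε u := by
    intro u hu hn
    set S : ℝ := ∑' x, μ x * (gradSq w μ u x + h x * u x ^ 2) with hSdef
    have hSsum : Summable (fun x => μ x * (gradSq w μ u x + h x * u x ^ 2)) := by
      have := hu.1.add hu.2; simpa [mul_add] using this
    have hS0 : 0 ≤ S := tsum_nonneg fun x => hterm_nonneg u x
    have hSτ : S ≤ τ₀ ^ 2 := by
      have h1 : Real.sqrt S ≤ τ₀ := by rw [normH, intV] at hn; exact hn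
      have h2 : Real.sqrt S ^ 2 ≤ τ₀ ^ 2 := pow_le_pow_left₀ (Real.sqrt_nonneg _) h1 2
      rwa [Real.sq_sqrt hS0] at h2
    -- pointwise bound on u
    have hpt : ∀ x, |u x| ≤ M := by
      intro x
      have h1 : μ x * (h x * u x ^ 2) ≤ μ x * (gradSq w μ u x + h x * u x ^ 2) := by
        have := gradSq_nonneg hwnn (fun y => (hμpos y).le) u x
        have := (hμpos x).le
        nlinarith
      have h2 : μ x * (gradSq w μ u x + h x * u x ^ 2) ≤ S :=
        Summable.le_tsum hSsum x (fun b _ => hterm_nonneg u b)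
      have h3 : μmin * (h₀ * u x ^ 2) ≤ μ x * (h x * u x ^ 2) := by
        have hmm : μmin * h₀ ≤ μ x * h x :=
          mul_le_mul (hμ x) (hH1 x) hh₀.le (hμpos x).le
        nlinarith [mul_le_mul_of_nonneg_right hmm (sq_nonneg (u x))]
      have h4 : u x ^ 2 ≤ τ₀ ^ 2 / (μmin * h₀) := by
        rw [le_div_iff₀ (by positivity)]
        nlinarith
      have hM2 : M ^ 2 = τ₀ ^ 2 / (μmin * h₀) := by
        rw [hMdef, div_pow, Real.sq_sqrt (by positivity)]
      have h5 : u x ^ 2 ≤ M ^ 2 := by rw [hM2]; exact h4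
      have := Real.sqrt_le_sqrt h5
      rwa [Real.sqrt_sq_eq_abs, Real.sqrt_sq hMpos.le] at this
    -- pointwise bound on F
    have hFb : ∀ x, Fint f x (u x) ≤ A * |u x| := by
      intro x
      rcases le_or_gt (u x) 0 with hux | hux
      · have hzero : Fint f x (u x) = 0 := by
          rw [Fint]
          have hEqOn : Set.EqOn (f x) (fun _ => (0:ℝ)) (Set.uIcc 0 (u x)) := by
            intro t ht
            rw [Set.uIcc_of_ge hux] at ht
            exact hfneg x t ht.2
          rw [intervalIntegral.integral_congr hEqOn]
          simp
        rw [hzero]; positivity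
      · have hint : IntervalIntegrable (f x) MeasureTheory.volume 0 (u x) :=
          (hF1c x).intervalIntegrable _ _
        have hle : ∀ t ∈ Set.Icc (0:ℝ) (u x), f x t ≤ A := by
          intro t ht
          refine hA x t ⟨ht.1, le_trans ht.2 ?_⟩
          calc u x ≤ |u x| := le_abs_self _
            _ ≤ M := hpt x
        have := intervalIntegral.integral_mono_on hux.le hint intervalIntegrable_const hle
        rw [intervalIntegral.integral_const, smul_eq_mul, sub_zero] at this
        rw [Fint]
        calc (∫ t in (0:ℝ)..u x, f x t) ≤ u x * A := this
          _ = A * |u x| := by rw [abs_of_pos hux]; ring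
    -- summability of μ|u|
    have hptw : ∀ x, μ x * |u x| ≤ (μ x * (1 / h x) + μ x * (h x * u x ^ 2)) / 2 := by
      intro x
      have hμx := hμpos x
      have hhx := hhpos x
      have e : (μ x * (1 / h x) + μ x * (h x * u x ^ 2)) / 2 - μ x * |u x|
          = (1 / (2 * h x)) * (μ x * (h x * |u x| - 1) ^ 2) := by
        field_simp; rw [← sq_abs (u x)]; ring
      have e2 : 0 ≤ (1 / (2 * h x)) * (μ x * (h x * |u x| - 1) ^ 2) := by
        have : (0:ℝ) ≤ 1 / (2 * h x) := by positivity
        exact mul_nonneg this (mul_nonneg hμx.le (sq_nonneg _))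
      linarith
    have hsum2 : Summable (fun x => (μ x * (1 / h x) + μ x * (h x * u x ^ 2)) / 2) :=
      (hH2.add hu.2).div_const 2
    have habs : Summable (fun x => μ x * |u x|) :=
      Summable.of_nonneg_of_le (fun x => mul_nonneg (hμpos x).le (abs_nonneg _)) hptw hsum2
    have hT : (∑' x, μ x * |u x|) ≤ B := by
      have h1 : (∑' x, μ x * |u x|) ≤ ∑' x, (μ x * (1 / h x) + μ x * (h x * u x ^ 2)) / 2 :=
        Summable.tsum_le_tsum hptw habs hsum2
      have h2 : (∑' x, (μ x * (1 / h x) + μ x * (h x * u x ^ 2)) / 2)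
          = (C₁ + ∑' x, μ x * (h x * u x ^ 2)) / 2 := by
        rw [tsum_div_const, Summable.tsum_add hH2 hu.2, hC₁def]
      have h3 : (∑' x, μ x * (h x * u x ^ 2)) ≤ S := by
        refine Summable.tsum_le_tsum (fun x => ?_) hu.2 hSsum
        have := gradSq_nonneg hwnn (fun y => (hμpos y).le) u x
        have := (hμpos x).le
        nlinarith
      rw [hBdef]
      calc (∑' x, μ x * |u x|) ≤ (C₁ + ∑' x, μ x * (h x * u x ^ 2)) / 2 := h1.trans_eq h2
        _ ≤ (C₁ + τ₀ ^ 2) / 2 := by linarith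
    -- bound on the F-integral
    have hFint : intV μ (fun x => Fint f x (u x)) ≤ A * B := by
      by_cases hs : Summable (fun x => μ x * Fint f x (u x))
      · have hcong : (fun x => μ x * (A * |u x|)) = fun x => A * (μ x * |u x|) := by
          funext x; ring
        calc intV μ (fun x => Fint f x (u x))
            ≤ ∑' x, μ x * (A * |u x|) := by
              refine Summable.tsum_le_tsum (fun x => mul_le_mul_of_nonneg_left (hFb x) (hμpos x).le)
                hs ?_
              rw [hcong]; exact habs.mul_left A
          _ = A * ∑' x, μ x * |u x| := by rw [hcong, tsum_mul_left]
          _ ≤ A * B := mul_le_mul_of_nonneg_left hT hA0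
      · rw [intV, tsum_eq_zero_of_not_summable hs]; positivity
    -- bound on the g-term
    have hgterm : ε * intV μ (fun x => g x * u x) ≤ ε * (C * τ₀) := by
      refine mul_le_mul_of_nonneg_left ?_ hε.le
      have h1 := (hC u hu).2
      calc intV μ (fun x => g x * u x) ≤ |intV μ fun x => g x * u x| := le_abs_self _
        _ ≤ C * normH w μ h u := h1
        _ ≤ C * τ₀ := mul_le_mul_of_nonneg_left hn hC0
    have hSint : intV μ (fun x => gradSq w μ u x + h x * u x ^ 2) = S := by
      rw [intV, hSdef]
    rw [energyP, energy, hSint, hLdef]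
    linarith
  -- conclusion about the infimum
  have hbdd : BddBelow ((fun u => energyP w μ h f g ε u) ''
      {u : V → ℝ | memH w μ h u ∧ normH w μ h u ≤ τ₀}) := by
    refine ⟨L, fun y hy => ?_⟩
    obtain ⟨u, ⟨hu, hn⟩, rfl⟩ := hy
    exact hLB u hu hn
  have hu₀memH : memH w μ h (fun x => (τ₀ / 2) * v x) := memH_smul _ hvmemH
  have hu₀norm : normH w μ h (fun x => (τ₀ / 2) * v x) = τ₀ / 2 := by
    rw [normH_smul, hnormv, mul_one, abs_of_pos (by positivity)]
  have hu₀mem : energyP w μ h f g ε (fun x => (τ₀ / 2) * v x) ∈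
      (fun u => energyP w μ h f g ε u) ''
      {u : V → ℝ | memH w μ h u ∧ normH w μ h u ≤ τ₀} := by
    exact ⟨_, ⟨hu₀memH, by rw [hu₀norm]; linarith⟩, rfl⟩
  have hval : energyP w μ h f g ε (fun x => (τ₀ / 2) * v x) < 0 :=
    hray (τ₀ / 2) (by positivity) (by linarith)
  exact lt_of_le_of_lt (csInf_le hbdd hu₀mem) hval


end GraphNLE
end

section
/- Let G=(V,E) be a locally finite graph with symmetric positive edge weights and measure μ:V→(0,∞), and let h satisfy (H1). Let f̃:V×ℝ→ℝ satisfy f̃(x,s) ≥ 0 for all (x,s) and f̃(x,s) = 0 for all s ≤ 0. If u ∈ ℋ is a weak solution of −Δu + hu = f̃(x,u), then u(x) ≥ 0 for all x ∈ V; if in addition G is connected and u ≢ 0, then u(x) > 0 for all x ∈ V. -/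
open Filter Topology

namespace GraphNLE

variable {V : Type*}

private lemma min0_key1 (a b : ℝ) :
    (min b 0 - min a 0) ^ 2 ≤ (b - a) * (min b 0 - min a 0) := by
  rcases le_total a 0 with ha | ha <;> rcases le_total b 0 with hb | hb <;>
    simp [min_eq_left, min_eq_right, ha, hb] <;> nlinarith

private lemma min0_key2 (a b : ℝ) :
    (b - a) * (min b 0 - min a 0) ≤ (b - a) ^ 2 := by
  rcases le_total a 0 with ha | ha <;> rcases le_total b 0 with hb | hb <;>
    simp [min_eq_left, min_eq_right, ha, hb] <;> nlinarith

private lemma min0_sq_sub (a b : ℝ) :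
    (min b 0 - min a 0) ^ 2 ≤ (b - a) ^ 2 :=
  (min0_key1 a b).trans (min0_key2 a b)

private lemma mul_min0 (a : ℝ) : a * min a 0 = (min a 0) ^ 2 := by
  rcases le_total a 0 with ha | ha <;> simp [min_eq_left, min_eq_right, ha] <;> ring

private lemma min0_sq_le (a : ℝ) : (min a 0) ^ 2 ≤ a ^ 2 := by
  rcases le_total a 0 with ha | ha <;> simp [min_eq_left, min_eq_right, ha] <;> nlinarith

private lemma tsum_le_tsum_of_finsupp {V : Type*} (s : Finset V) {f g : V → ℝ}
    (hf : ∀ y ∉ s, f y = 0) (hg : ∀ y ∉ s, g y = 0) (hle : ∀ y, f y ≤ g y) :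
    ∑' y, f y ≤ ∑' y, g y := by
  rw [tsum_eq_sum hf, tsum_eq_sum hg]
  exact Finset.sum_le_sum fun y _ => hle y

theorem maximum_principle_for_nonnegative_nonlinearity
    (w : V → V → ℝ) (hsymm : ∀ x y, w x y = w y x) (hwnn : ∀ x y, 0 ≤ w x y)
    (hlf : ∀ x : V, {y | w x y ≠ 0}.Finite)
    (μ : V → ℝ) (hμ : ∀ x, 0 < μ x)
    (h : V → ℝ) (h₀ : ℝ) (hh₀ : 0 < h₀) (hH1 : ∀ x, h₀ ≤ h x)
    (f : V → ℝ → ℝ) (hfnn : ∀ x, ∀ s : ℝ, 0 ≤ f x s)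
    (hfzero : ∀ x, ∀ s : ℝ, s ≤ 0 → f x s = 0)
    (u : V → ℝ) (hu : weakSol w μ h f u) :
    (∀ x, 0 ≤ u x) ∧
      ((adjGraph w).Connected → u ≠ 0 → ∀ x, 0 < u x) := by
  classical
  obtain ⟨humem, hweak⟩ := hu
  set m : V → ℝ := fun x => min (u x) 0 with hmdef
  have hwvanish : ∀ x, ∀ y ∉ (hlf x).toFinset, w x y = 0 := by
    intro x y hy
    by_contra hne
    exact hy ((hlf x).mem_toFinset.mpr hne)
  have gradSq_nonneg : ∀ (v : V → ℝ) (x : V), 0 ≤ gradSq w μ v x := by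
    intro v x
    have h2μ : (0:ℝ) < 2 * μ x := by linarith [hμ x]
    exact mul_nonneg (le_of_lt (one_div_pos.mpr h2μ))
      (tsum_nonneg fun y => mul_nonneg (hwnn x y) (sq_nonneg _))
  have hgm_le : ∀ x, gradSq w μ m x ≤ gradSq w μ u x := by
    intro x
    have h2μ : (0:ℝ) < 2 * μ x := by linarith [hμ x]
    apply mul_le_mul_of_nonneg_left _ (le_of_lt (one_div_pos.mpr h2μ))
    apply tsum_le_tsum_of_finsupp (hlf x).toFinset
    · intro y hy; rw [hwvanish x y hy, zero_mul]
    · intro y hy; rw [hwvanish x y hy, zero_mul]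
    · intro y
      exact mul_le_mul_of_nonneg_left (min0_sq_sub (u x) (u y)) (hwnn x y)
  have hγ_ge : ∀ x, gradSq w μ m x ≤ gamma w μ u m x := by
    intro x
    have h2μ : (0:ℝ) < 2 * μ x := by linarith [hμ x]
    apply mul_le_mul_of_nonneg_left _ (le_of_lt (one_div_pos.mpr h2μ))
    apply tsum_le_tsum_of_finsupp (hlf x).toFinset
    · intro y hy; rw [hwvanish x y hy, zero_mul]
    · intro y hy; rw [hwvanish x y hy, zero_mul, zero_mul]
    · intro y
      rw [mul_assoc]
      exact mul_le_mul_of_nonneg_left (min0_key1 (u x) (u y)) (hwnn x y)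
  have hγ_le : ∀ x, gamma w μ u m x ≤ gradSq w μ u x := by
    intro x
    have h2μ : (0:ℝ) < 2 * μ x := by linarith [hμ x]
    apply mul_le_mul_of_nonneg_left _ (le_of_lt (one_div_pos.mpr h2μ))
    apply tsum_le_tsum_of_finsupp (hlf x).toFinset
    · intro y hy; rw [hwvanish x y hy, zero_mul, zero_mul]
    · intro y hy; rw [hwvanish x y hy, zero_mul]
    · intro y
      rw [mul_assoc]
      exact mul_le_mul_of_nonneg_left (min0_key2 (u x) (u y)) (hwnn x y)
  have hsum_gm : Summable (fun x => μ x * gradSq w μ m x) :=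
    Summable.of_nonneg_of_le (fun x => mul_nonneg (hμ x).le (gradSq_nonneg m x))
      (fun x => mul_le_mul_of_nonneg_left (hgm_le x) (hμ x).le) humem.1
  have hhnn : ∀ x, (0:ℝ) ≤ h x := fun x => le_trans hh₀.le (hH1 x)
  have hsum_hm : Summable (fun x => μ x * (h x * m x ^ 2)) :=
    Summable.of_nonneg_of_le
      (fun x => mul_nonneg (hμ x).le (mul_nonneg (hhnn x) (sq_nonneg _)))
      (fun x => mul_le_mul_of_nonneg_left
        (mul_le_mul_of_nonneg_left (min0_sq_le (u x)) (hhnn x)) (hμ x).le) humem.2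
  have heq := hweak m ⟨hsum_gm, hsum_hm⟩
  simp only [intV] at heq
  have hum : ∀ x, h x * u x * m x = h x * m x ^ 2 := by
    intro x
    rw [mul_assoc, mul_min0 (u x)]
  have hsum_γ : Summable (fun x => μ x * gamma w μ u m x) :=
    Summable.of_nonneg_of_le
      (fun x => mul_nonneg (hμ x).le ((gradSq_nonneg m x).trans (hγ_ge x)))
      (fun x => mul_le_mul_of_nonneg_left (hγ_le x) (hμ x).le) humem.1
  have hsum_lhs : Summable (fun x => μ x * (gamma w μ u m x + h x * u x * m x)) := by
    have : (fun x => μ x * (gamma w μ u m x + h x * u x * m x)) =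
        fun x => μ x * gamma w μ u m x + μ x * (h x * m x ^ 2) := by
      funext x; rw [hum x]; ring
    rw [this]
    exact hsum_γ.add hsum_hm
  have h1 : (∑' x, μ x * (h x * m x ^ 2)) ≤
      ∑' x, μ x * (gamma w μ u m x + h x * u x * m x) := by
    refine Summable.tsum_le_tsum (fun x => ?_) hsum_hm hsum_lhs
    rw [hum x]
    have hγ0 : 0 ≤ gamma w μ u m x := (gradSq_nonneg m x).trans (hγ_ge x)
    nlinarith [(hμ x).le]
  have h2 : (∑' x, μ x * (f x (u x) * m x)) ≤ 0 := by
    refine tsum_nonpos fun x => ?_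
    have hm0 : m x ≤ 0 := min_le_right _ _
    have : f x (u x) * m x ≤ 0 := mul_nonpos_of_nonneg_of_nonpos (hfnn x _) hm0
    exact mul_nonpos_of_nonneg_of_nonpos (hμ x).le this
  have hA_sum : Summable (fun x => μ x * m x ^ 2) := by
    refine Summable.of_nonneg_of_le (fun x => mul_nonneg (hμ x).le (sq_nonneg _))
      (fun x => ?_) (hsum_hm.mul_left (1 / h₀))
    have key : h₀ * (μ x * m x ^ 2) ≤ h x * (μ x * m x ^ 2) :=
      mul_le_mul_of_nonneg_right (hH1 x) (mul_nonneg (hμ x).le (sq_nonneg _))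
    rw [one_div, inv_mul_eq_div, le_div_iff₀ hh₀]
    nlinarith [key]
  have h3 : h₀ * (∑' x, μ x * m x ^ 2) ≤ ∑' x, μ x * (h x * m x ^ 2) := by
    rw [← tsum_mul_left]
    refine Summable.tsum_le_tsum (fun x => ?_) (hA_sum.mul_left h₀) hsum_hm
    have key : h₀ * (μ x * m x ^ 2) ≤ h x * (μ x * m x ^ 2) :=
      mul_le_mul_of_nonneg_right (hH1 x) (mul_nonneg (hμ x).le (sq_nonneg _))
    nlinarith [key]
  have hA0 : 0 ≤ ∑' x, μ x * m x ^ 2 :=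
    tsum_nonneg fun x => mul_nonneg (hμ x).le (sq_nonneg _)
  have hA : (∑' x, μ x * m x ^ 2) = 0 := by
    have : h₀ * (∑' x, μ x * m x ^ 2) ≤ 0 := by
      calc h₀ * (∑' x, μ x * m x ^ 2) ≤ ∑' x, μ x * (h x * m x ^ 2) := h3
        _ ≤ ∑' x, μ x * (gamma w μ u m x + h x * u x * m x) := h1
        _ = ∑' x, μ x * (f x (u x) * m x) := heq
        _ ≤ 0 := h2
    nlinarith
  have hnn : ∀ x, 0 ≤ u x := by
    intro x
    have hle : μ x * m x ^ 2 ≤ 0 := by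
      rw [← hA]
      exact Summable.le_tsum hA_sum x fun j _ => mul_nonneg (hμ j).le (sq_nonneg _)
    have hz : μ x * m x ^ 2 = 0 :=
      le_antisymm hle (mul_nonneg (hμ x).le (sq_nonneg _))
    have hmz : m x = 0 := by
      rcases mul_eq_zero.mp hz with hc | hc
      · exact absurd hc (hμ x).ne'
      · exact pow_eq_zero_iff (by norm_num) |>.mp hc
    exact min_eq_right_iff.mp hmz
  refine ⟨hnn, ?_⟩
  intro hconn hne x
  have spread : ∀ x₀, u x₀ = 0 → ∀ y₀, w x₀ y₀ ≠ 0 → u y₀ = 0 := by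
    intro x₀ hx₀ y₀ hwy
    by_cases hyx : y₀ = x₀
    · rw [hyx]; exact hx₀
    set δ : V → ℝ := fun z => if z = x₀ then (1:ℝ) else 0 with hδ
    set s : Finset V := insert x₀ (hlf x₀).toFinset with hs
    have hsmem : ∀ x, x ∉ s → x ≠ x₀ ∧ w x₀ x = 0 := by
      intro x hx
      rw [hs, Finset.mem_insert, (hlf x₀).mem_toFinset] at hx
      push_neg at hx
      exact ⟨hx.1, not_not.mp hx.2⟩
    have hδgrad0 : ∀ x ∉ s, gradSq w μ δ x = 0 := by
      intro x hx
      obtain ⟨hx1, hx2⟩ := hsmem x hx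
      have hδx : δ x = 0 := if_neg hx1
      have hzero : ∀ y, w x y * (δ y - δ x) ^ 2 = 0 := by
        intro y
        by_cases hy : y = x₀
        · subst hy
          rw [hsymm x y, hx2, zero_mul]
        · have hδy : δ y = 0 := if_neg hy
          rw [hδy, hδx]
          simp
      simp only [gradSq]
      rw [tsum_congr hzero, tsum_zero, mul_zero]
    have hmemδ : memH w μ h δ := by
      constructor
      · refine summable_of_ne_finset_zero (s := s) fun x hx => ?_
        rw [hδgrad0 x hx, mul_zero]
      · refine summable_of_ne_finset_zero (s := {x₀}) fun x hx => ?_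
        have hδx : δ x = 0 := if_neg (by simpa using hx)
        rw [hδx]
        ring
    have heq2 := hweak δ hmemδ
    simp only [intV] at heq2
    set g : V → ℝ := fun x => μ x * (gamma w μ u δ x + h x * u x * δ x) with hg
    have hδx₀ : δ x₀ = 1 := if_pos rfl
    have hgx : ∀ x, x ≠ x₀ → g x = -(w x₀ x * u x) / 2 := by
      intro x hx
      have hδx : δ x = 0 := if_neg hx
      have hinner : (∑' y, w x y * (u y - u x) * (δ y - δ x)) =
          w x x₀ * (u x₀ - u x) * (δ x₀ - δ x) := by
        refine tsum_eq_single x₀ fun y hy => ?_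
        have hδy : δ y = 0 := if_neg hy
        rw [hδy, hδx]
        ring
      rw [hg]
      simp only [gamma]
      rw [hinner, hδx₀, hδx, hx₀, hsymm x x₀]
      have hμx := (hμ x).ne'
      field_simp
      ring
    have hgx0 : g x₀ ≤ 0 := by
      have hin : (∑' y, w x₀ y * (u y - u x₀) * (δ y - δ x₀)) ≤ 0 := by
        refine tsum_nonpos fun y => ?_
        by_cases hy : y = x₀
        · subst hy; simp
        · have hδy : δ y = 0 := if_neg hy
          rw [hδy, hδx₀, hx₀]
          have := hwnn x₀ y
          have := hnn y
          nlinarith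
      have h2μ : (0:ℝ) < 2 * μ x₀ := by linarith [hμ x₀]
      have hγδ : gamma w μ u δ x₀ ≤ 0 :=
        mul_nonpos_of_nonneg_of_nonpos (le_of_lt (one_div_pos.mpr h2μ)) hin
      rw [hg]
      simp only
      rw [hx₀]
      nlinarith [(hμ x₀).le]
    have hgnonpos : ∀ x, g x ≤ 0 := by
      intro x
      by_cases hx : x = x₀
      · subst hx; exact hgx0
      · rw [hgx x hx]
        have := hwnn x₀ x
        have := hnn x
        nlinarith
    have hgvanish : ∀ x ∉ s, g x = 0 := by
      intro x hx
      obtain ⟨hx1, hx2⟩ := hsmem x hx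
      rw [hgx x hx1, hx2]
      ring
    have hgsum : Summable g := summable_of_ne_finset_zero hgvanish
    have htsum_le : (∑' x, g x) ≤ g y₀ := by
      have hneg : -g y₀ ≤ ∑' x, -g x :=
        Summable.le_tsum hgsum.neg y₀ fun j _ => neg_nonneg.mpr (hgnonpos j)
      rw [tsum_neg] at hneg
      linarith
    have hrhs : (∑' x, μ x * (f x (u x) * δ x)) = μ x₀ * (f x₀ (u x₀) * δ x₀) := by
      refine tsum_eq_single x₀ fun y hy => ?_
      have hδy : δ y = 0 := if_neg hy
      rw [hδy]
      ring
    have hrhs0 : 0 ≤ ∑' x, μ x * (f x (u x) * δ x) := by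
      rw [hrhs]
      exact mul_nonneg (hμ x₀).le (mul_nonneg (hfnn x₀ _) (by rw [hδx₀]; norm_num))
    have hfin : 0 ≤ -(w x₀ y₀ * u y₀) / 2 := by
      have : (∑' x, g x) = ∑' x, μ x * (f x (u x) * δ x) := heq2
      rw [← hgx y₀ hyx]
      linarith [htsum_le, hrhs0, this ▸ hrhs0]
    have hprod : w x₀ y₀ * u y₀ = 0 := by
      have h1' : 0 ≤ w x₀ y₀ * u y₀ := mul_nonneg (hwnn x₀ y₀) (hnn y₀)
      linarith
    exact (mul_eq_zero.mp hprod).resolve_left hwy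
  obtain ⟨z, hz⟩ : ∃ z, u z ≠ 0 := by
    by_contra hzc
    push_neg at hzc
    exact hne (funext fun v => hzc v)
  rcases lt_or_eq_of_le (hnn x) with hpos | hzero
  · exact hpos
  have hwalk : ∀ {a b : V} (p : (adjGraph w).Walk a b), u a = 0 → u b = 0 := by
    intro a b p
    induction p with
    | nil => exact id
    | cons hadj p ih =>
      intro ha
      refine ih (spread _ ha _ ?_)
      rcases hadj.2 with hw | hw
      · exact hw
      · rw [hsymm]; exact hw
  obtain ⟨p⟩ := hconn.preconnected x z
  exact absurd (hwalk p hzero.symm) hz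



end GraphNLE
end
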